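/- arXiv:0711.4730 — 4 statements merged into one kernel-verified Lean document; each statement's English description precedes it below -/
import Mathlib

section
/- Let S/R be an integral extension of Noetherian integral domains with R normal. For every proper ideal I of R, the height of I in R equals the height of the extension ideal SI in S. -/
set_option linter.unusedSectionVars false
set_option linter.unnecessarySimpa false

open Polynomial

/-- The height of an ideal: the infimum of the heights of the prime ideals containing it. -/
noncomputable def idealHeight {R : Type*} [CommRing R] (I : Ideal R) : ℕ∞ :=
  ⨅ (p : PrimeSpectrum R) (_ : I ≤ p.asIdeal), Order.height p

lemma aux_exists_monic_coeff_mem {R S : Type*} [CommRing R] [CommRing S] [Algebra R S]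
    [Algebra.IsIntegral R S] (J : Ideal R) (x : S)
    (hx : x ∈ J.map (algebraMap R S)) :
    ∃ f : R[X], f.Monic ∧ (∀ k < f.natDegree, f.coeff k ∈ J) ∧ Polynomial.aeval x f = 0 := by
  classical
  rw [Ideal.map, Ideal.span, Submodule.mem_span_set] at hx
  obtain ⟨c, hsupp, hsum⟩ := hx
  -- the finite set of `S`-coefficients
  set t : Finset S := c.support.image c with ht
  set A : Subalgebra R S := Algebra.adjoin R (t : Set S) with hA
  set N : Submodule R S := Subalgebra.toSubmodule A with hN
  have hNfg : N.FG := fg_adjoin_of_finite t.finite_toSet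
    (fun x _ => Algebra.IsIntegral.isIntegral x)
  have hxJN : x ∈ J • N := by
    rw [← hsum, Finsupp.sum]
    refine Submodule.sum_mem _ (fun y hy => ?_)
    obtain ⟨a, haJ, rfl⟩ := hsupp hy
    have hcy : c (algebraMap R S a) ∈ N := by
      apply Algebra.subset_adjoin
      exact Finset.mem_image_of_mem c hy
    have : c (algebraMap R S a) • algebraMap R S a = a • (c (algebraMap R S a)) := by
      rw [smul_eq_mul, mul_comm, ← Algebra.smul_def]
    rw [this]
    exact Submodule.smul_mem_smul haJ hcy
  have hxN : x ∈ N := Submodule.smul_le_right hxJN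
  -- stability of N under multiplication by x
  have hmulN : ∀ m ∈ N, x * m ∈ N := fun m hm => A.mul_mem hxN hm
  have hmulJN : ∀ m ∈ N, x * m ∈ J • N := by
    intro m hm
    refine Submodule.smul_induction_on hxJN (fun a ha z hz => ?_) (fun z w hz hw => ?_)
    · have : (a • z) * m = a • (z * m) := by rw [smul_mul_assoc]
      rw [this]
      exact Submodule.smul_mem_smul ha (A.mul_mem hz hm)
    · rw [add_mul]; exact Submodule.add_mem _ hz hw
  haveI : Module.Finite R N := Module.Finite.iff_fg.mpr hNfg
  -- the multiplication endomorphism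
  let φ : Module.End R N := LinearMap.restrict (LinearMap.mulLeft R x)
    (p := N) (q := N) (fun m hm => hmulN m hm)
  have hφval : ∀ m : N, ((φ m : S)) = x * (m : S) := fun m => rfl
  have hrange : LinearMap.range φ ≤ J • (⊤ : Submodule R N) := by
    rintro _ ⟨m, rfl⟩
    have h1 : (Submodule.map N.subtype (J • (⊤ : Submodule R N))) = J • N := by
      rw [Submodule.map_smul'', Submodule.map_top, Submodule.range_subtype]
    have h2 : ((φ m : S)) ∈ J • N := hmulJN m m.2
    rw [← h1] at h2
    obtain ⟨w, hw, hweq⟩ := h2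
    have : w = φ m := Subtype.ext hweq
    exact this ▸ hw
  obtain ⟨f, hf, -, hcoeff, haeval⟩ :=
    LinearMap.exists_monic_and_coeff_mem_pow_and_aeval_eq_zero_of_range_le_smul R φ J hrange
  refine ⟨f, hf, fun k hk => ?_, ?_⟩
  · exact Ideal.pow_le_self (Nat.sub_ne_zero_of_lt hk) (hcoeff k)
  · have key : ∀ (g : R[X]) (m : N), (((Polynomial.aeval φ g) m : S)) = Polynomial.aeval x g * m := by
      intro g
      induction g using Polynomial.induction_on with
      | C a => intro m; simp [Algebra.smul_def, Module.algebraMap_end_apply]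
      | add p q hp hq => intro m; simp [hp, hq, add_mul]
      | monomial n a hn =>
        intro m
        have e1 : (C a * X ^ (n+1)) = (C a * X ^ n) * X := by ring
        rw [e1, map_mul (Polynomial.aeval φ), Polynomial.aeval_X, Module.End.mul_apply,
          hn (φ m), hφval]
        simp only [map_mul, Polynomial.aeval_X]
        ring
    have h1N : (1 : S) ∈ N := A.one_mem
    have := key f ⟨1, h1N⟩
    rw [haeval] at this
    simpa using this.symm

lemma aux_coeff_minpoly_mem {R S : Type*} [CommRing R] [CommRing S] [IsDomain R] [IsDomain S]
    [Algebra R S] [Algebra.IsIntegral R S] [IsIntegrallyClosed R] [NoZeroSMulDivisors R S]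
    (p' : Ideal R) [p'.IsPrime] (x : S) (hx : x ∈ p'.map (algebraMap R S)) :
    ∀ k < (minpoly R x).natDegree, (minpoly R x).coeff k ∈ p' := by
  obtain ⟨f, hf, hcoeff, haeval⟩ := aux_exists_monic_coeff_mem p' x hx
  have hint : IsIntegral R x := Algebra.IsIntegral.isIntegral x
  have hg : (minpoly R x).Monic := minpoly.monic hint
  obtain ⟨h, hfh⟩ := minpoly.isIntegrallyClosed_dvd hint haeval
  have hh : h.Monic := by
    have := hfh ▸ hf
    exact hg.of_mul_monic_left this
  set φ := Ideal.Quotient.mk p' with hφ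
  have hmapf : f.map φ = X ^ f.natDegree := by
    ext k
    rw [coeff_map, coeff_X_pow]
    rcases lt_trichotomy k f.natDegree with hk | hk | hk
    · rw [if_neg hk.ne, Ideal.Quotient.eq_zero_iff_mem]
      exact hcoeff k hk
    · rw [if_pos hk, hk, hf.coeff_natDegree, map_one]
    · rw [if_neg hk.ne', coeff_eq_zero_of_natDegree_lt hk, map_zero]
  have hdvd : (minpoly R x).map φ ∣ X ^ f.natDegree := by
    rw [← hmapf, hfh, Polynomial.map_mul]
    exact dvd_mul_right _ _
  obtain ⟨i, hin, hassoc⟩ := (dvd_prime_pow Polynomial.prime_X f.natDegree).mp hdvd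
  have heq : (minpoly R x).map φ = X ^ i :=
    Polynomial.eq_of_monic_of_associated (hg.map φ) (monic_X_pow i) hassoc
  have hi : i = (minpoly R x).natDegree := by
    have := congrArg natDegree heq
    rwa [hg.natDegree_map, natDegree_X_pow, eq_comm] at this
  intro k hk
  have : ((minpoly R x).map φ).coeff k = 0 := by
    rw [heq, coeff_X_pow, if_neg (by omega)]
  rw [coeff_map] at this
  exact Ideal.Quotient.eq_zero_iff_mem.mp this

lemma aux_noZeroSMulDivisors_of_injective {R A : Type*} [CommRing R] [CommRing A] [IsDomain A]
    [Algebra R A] (h : Function.Injective (algebraMap R A)) : NoZeroSMulDivisors R A :=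
  ⟨fun {c x} hcx => by
    rw [Algebra.smul_def, mul_eq_zero] at hcx
    exact hcx.imp_left (fun hc => h (by rw [hc, map_zero]))⟩

lemma aux_pow_mem {R S : Type*} [CommRing R] [CommRing S] [IsDomain R] [IsDomain S]
    [Algebra R S] [Algebra.IsIntegral R S] [IsIntegrallyClosed R] [NoZeroSMulDivisors R S]
    (p' : Ideal R) [p'.IsPrime] {a : R} {s : S}
    (hmem : algebraMap R S a * s ∈ p'.map (algebraMap R S)) (hanot : a ∉ p') :
    s ^ (minpoly R s).natDegree ∈ p'.map (algebraMap R S) := by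
  have ha0 : a ≠ 0 := fun h => hanot (h ▸ p'.zero_mem)
  set y : S := algebraMap R S a * s with hy
  have hsint : IsIntegral R s := Algebra.IsIntegral.isIntegral s
  have hyint : IsIntegral R y := Algebra.IsIntegral.isIntegral y
  set K := FractionRing R
  set L := FractionRing S
  haveI : NoZeroSMulDivisors R L := by
    refine aux_noZeroSMulDivisors_of_injective ?_
    rw [IsScalarTower.algebraMap_eq R S L]
    exact (IsFractionRing.injective S L).comp (FaithfulSMul.algebraMap_injective R S)
  letI : Algebra K L := FractionRing.liftAlgebra R L
  haveI : IsScalarTower R K L := FractionRing.isScalarTower_liftAlgebra R L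
  set s' : L := algebraMap S L s with hs'
  set y' : L := algebraMap S L y with hy'
  set α : K := algebraMap R K a with hα
  have hα0 : α ≠ 0 := fun h =>
    ha0 ((map_eq_zero_iff _ (FaithfulSMul.algebraMap_injective R K)).mp h)
  have hαL : algebraMap K L α = algebraMap R L a := (IsScalarTower.algebraMap_apply R K L a).symm
  have hy'eq : y' = algebraMap K L α * s' := by
    rw [hαL, hy', hy, map_mul, ← IsScalarTower.algebraMap_apply R S L]
  -- minimal polynomials over K are maps of minimal polynomials over R
  have e_s : minpoly K s' = (minpoly R s).map (algebraMap R K) :=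
    minpoly.isIntegrallyClosed_eq_field_fractions K L hsint
  have e_y : minpoly K y' = (minpoly R y).map (algebraMap R K) :=
    minpoly.isIntegrallyClosed_eq_field_fractions K L hyint
  set n := (minpoly R y).natDegree with hn
  set m := (minpoly R s).natDegree with hm
  have hs'int : IsIntegral K s' := by
    have : IsIntegral R s' := hsint.map (IsScalarTower.toAlgHom R S L)
    exact this.tower_top
  have hy'int : IsIntegral K y' := by
    have : IsIntegral R y' := hyint.map (IsScalarTower.toAlgHom R S L)
    exact this.tower_top
  have hdeg_s : (minpoly K s').natDegree = m := by rw [e_s, (minpoly.monic hsint).natDegree_map]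
  have hdeg_y : (minpoly K y').natDegree = n := by rw [e_y, (minpoly.monic hyint).natDegree_map]
  -- n ≤ m
  have hnm : n ≤ m := by
    have hroot : Polynomial.aeval y' ((minpoly K s').scaleRoots α) = 0 := by
      rw [hy'eq]
      exact scaleRoots_aeval_eq_zero (minpoly.aeval K s')
    have hdvd := minpoly.dvd K y' hroot
    have hne : (minpoly K s').scaleRoots α ≠ 0 :=
      ((monic_scaleRoots_iff α).mpr (minpoly.monic hs'int)).ne_zero
    have := Polynomial.natDegree_le_of_dvd hdvd hne
    rwa [natDegree_scaleRoots, hdeg_y, hdeg_s] at this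
  -- m ≤ n, and indeed minpoly K s' equals the scaled minpoly of y'
  have hroot2 : Polynomial.aeval s' ((minpoly K y').scaleRoots α⁻¹) = 0 := by
    have : algebraMap K L α⁻¹ * y' = s' := by
      rw [hy'eq, map_inv₀, ← mul_assoc, inv_mul_cancel₀ (fun h => hα0 ?_), one_mul]
      exact (map_eq_zero_iff _ (algebraMap K L).injective).mp h
    rw [← this]
    exact scaleRoots_aeval_eq_zero (minpoly.aeval K y')
  have hdvd2 := minpoly.dvd K s' hroot2
  have hmonic2 : ((minpoly K y').scaleRoots α⁻¹).Monic :=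
    (monic_scaleRoots_iff α⁻¹).mpr (minpoly.monic hy'int)
  have hmn : m ≤ n := by
    have := Polynomial.natDegree_le_of_dvd hdvd2 hmonic2.ne_zero
    rwa [natDegree_scaleRoots, hdeg_s, hdeg_y] at this
  have hnm' : m = n := le_antisymm hmn hnm
  -- equality of minpoly K s' with the scaled polynomial
  have heq : minpoly K s' = (minpoly K y').scaleRoots α⁻¹ := by
    obtain ⟨c, hc⟩ := hdvd2
    have hc0 : c ≠ 0 := by
      intro h; rw [h, mul_zero] at hc; exact hmonic2.ne_zero hc
    have hcdeg : c.natDegree = 0 := by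
      have := congrArg natDegree hc
      rw [natDegree_scaleRoots, hdeg_y,
        Polynomial.natDegree_mul (minpoly.ne_zero hs'int) hc0, hdeg_s, hnm'] at this
      omega
    have hcmonic : c.Monic := (minpoly.monic hs'int).of_mul_monic_left (hc ▸ hmonic2)
    have : c = 1 := hcmonic.natDegree_eq_zero.mp hcdeg
    rw [hc, this, mul_one]
  -- coefficient comparison
  have hcoeffR : ∀ i < n, (minpoly R s).coeff i * a ^ (n - i) = (minpoly R y).coeff i := by
    intro i hi
    have h1 : (minpoly K s').coeff i = (minpoly K y').coeff i * α⁻¹ ^ (n - i) := by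
      rw [heq, coeff_scaleRoots, hdeg_y]
    rw [e_s, e_y, coeff_map, coeff_map] at h1
    have h2 : algebraMap R K ((minpoly R s).coeff i) * α ^ (n - i)
        = algebraMap R K ((minpoly R y).coeff i) := by
      rw [h1, mul_assoc, ← mul_pow, inv_mul_cancel₀ hα0, one_pow, mul_one]
    have h3 := h2
    rw [hα, ← map_pow, ← map_mul] at h3
    exact FaithfulSMul.algebraMap_injective R K h3
  -- coefficients of minpoly R s lie in p'
  have hcoeffmem : ∀ i < m, (minpoly R s).coeff i ∈ p' := by
    intro i hi
    have hyc := aux_coeff_minpoly_mem p' y hmem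
    have h4 : (minpoly R s).coeff i * a ^ (n - i) ∈ p' := by
      rw [hcoeffR i (hnm' ▸ hi)]
      exact hyc i (by rw [← hn]; omega)
    rcases (Ideal.IsPrime.mul_mem_iff_mem_or_mem ‹p'.IsPrime›).mp h4 with h | h
    · exact h
    · exact absurd (‹p'.IsPrime›.mem_of_pow_mem _ h) hanot
  -- conclude : s ^ m = - (lower part) ∈ p' S
  set u : R[X] := X ^ m - minpoly R s with hu
  have hucoeff : ∀ k, u.coeff k ∈ p' := by
    intro k
    rw [hu, coeff_sub, coeff_X_pow]
    rcases lt_trichotomy k m with hk | hk | hk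
    · rw [if_neg hk.ne]
      simpa using p'.neg_mem (hcoeffmem k hk)
    · rw [if_pos hk, hk, (minpoly.monic hsint).coeff_natDegree]
      simpa using p'.zero_mem
    · rw [if_neg hk.ne', coeff_eq_zero_of_natDegree_lt hk]
      simpa using p'.zero_mem
  have hueval : Polynomial.aeval s u = s ^ m := by
    rw [hu, map_sub, map_pow, aeval_X, minpoly.aeval, sub_zero]
  rw [← hueval, Polynomial.aeval_eq_sum_range]
  refine Ideal.sum_mem _ (fun i _ => ?_)
  rw [Algebra.smul_def]
  exact Ideal.mul_mem_right _ _ (Ideal.mem_map_of_mem _ (hucoeff i))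

lemma aux_going_down {R S : Type*} [CommRing R] [CommRing S] [IsDomain R] [IsDomain S]
    [Algebra R S] [Algebra.IsIntegral R S] [IsIntegrallyClosed R] [NoZeroSMulDivisors R S]
    (p' p : Ideal R) [p'.IsPrime] [p.IsPrime] (hpp : p' ≤ p)
    (q : Ideal S) [q.IsPrime] (hq : q.comap (algebraMap R S) = p) :
    ∃ q' : Ideal S, q'.IsPrime ∧ q' ≤ q ∧ q'.comap (algebraMap R S) = p' := by
  classical
  set T := Localization q.primeCompl with hT
  set g : R →+* T := (algebraMap S T).comp (algebraMap R S) with hg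
  have hmapq : p'.map (algebraMap R S) ≤ q := Ideal.map_le_iff_le_comap.mpr (hq ▸ hpp)
  -- the contraction of the extension of p' to T is p'
  have hc : (p'.map g).comap g = p' := by
    refine le_antisymm ?_ Ideal.le_comap_map
    intro a ha
    rw [Ideal.mem_comap] at ha
    have hmm : p'.map g = (p'.map (algebraMap R S)).map (algebraMap S T) := by
      rw [Ideal.map_map, hg]
    rw [hmm] at ha
    rw [IsLocalization.mem_map_algebraMap_iff q.primeCompl T] at ha
    obtain ⟨⟨x, u⟩, hxu⟩ := ha
    have : algebraMap S T ((algebraMap R S a) * (u : S) - (x : S)) = 0 := by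
      rw [map_sub, map_mul, sub_eq_zero]
      exact hxu
    rw [IsLocalization.map_eq_zero_iff q.primeCompl T] at this
    obtain ⟨t, ht⟩ := this
    have htne : (t : S) ≠ 0 := fun h => t.2 (h ▸ q.zero_mem)
    have hux : (algebraMap R S a) * (u : S) = (x : S) := by
      have := mul_eq_zero.mp ht
      rcases this with h | h
      · exact absurd h htne
      · exact sub_eq_zero.mp h
    -- now a ∈ p'
    by_contra hanot
    have := aux_pow_mem p' (hux.symm ▸ x.2) hanot
    have hpow : (u : S) ^ (minpoly R (u : S)).natDegree ∈ q := hmapq this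
    exact u.2 ((inferInstance : q.IsPrime).mem_of_pow_mem _ hpow)
  -- p' is a minimal prime over the contraction, so it is the contraction of a prime
  have hmin : p' ∈ ((p'.map g).comap g).minimalPrimes := by
    rw [hc]
    exact ⟨⟨inferInstance, le_rfl⟩, fun b hb hba => hb.2⟩
  obtain ⟨Q, hQprime, hQle, hQcomap⟩ := Ideal.exists_comap_eq_of_mem_minimalPrimes g p' hmin
  haveI := hQprime
  refine ⟨Q.comap (algebraMap S T), Ideal.IsPrime.comap _, ?_, ?_⟩
  · intro z hz
    rw [Ideal.mem_comap] at hz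
    by_contra hzq
    have : IsUnit (algebraMap S T z) := IsLocalization.map_units T (⟨z, hzq⟩ : q.primeCompl)
    exact hQprime.ne_top (Q.eq_top_of_isUnit_mem hz this)
  · rw [Ideal.comap_comap, ← hg, hQcomap]

section aux
variable {R S : Type*} [CommRing R] [CommRing S] [IsDomain R] [IsDomain S]
    [Algebra R S] [Algebra.IsIntegral R S] [IsIntegrallyClosed R] [NoZeroSMulDivisors R S]

/-- contraction map on prime spectra -/
noncomputable def auxPi (R : Type*) {S : Type*} [CommRing R] [CommRing S] [Algebra R S]
    (q : PrimeSpectrum S) : PrimeSpectrum R :=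
  ⟨q.asIdeal.comap (algebraMap R S), Ideal.IsPrime.comap _⟩

lemma auxPi_strictMono : StrictMono (auxPi R (S := S)) := by
  intro q1 q2 h
  rw [← PrimeSpectrum.asIdeal_lt_asIdeal] at h ⊢
  obtain ⟨x, hx2, hx1⟩ := SetLike.exists_of_lt h
  exact Ideal.comap_lt_comap_of_integral_mem_sdiff h.le ⟨hx2, hx1⟩
    (Algebra.IsIntegral.isIntegral x)

lemma aux_chain_lift (n : ℕ) :
    ∀ l : LTSeries (PrimeSpectrum R), l.length = n → ∀ q : PrimeSpectrum S,
      auxPi R q = l.last →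
      ∃ l' : LTSeries (PrimeSpectrum S), l'.length = n ∧ l'.last = q := by
  induction n with
  | zero => exact fun l hl q hq => ⟨RelSeries.singleton _ q, rfl, rfl⟩
  | succ n ih =>
    intro l hl q hq
    have hne : l.length ≠ 0 := by omega
    have hlt : l.eraseLast.last < l.last := l.eraseLast_last_rel_last hne
    haveI := l.eraseLast.last.isPrime
    haveI := q.isPrime
    have hcomap : q.asIdeal.comap (algebraMap R S) = l.last.asIdeal := by
      rw [← hq]; rfl
    obtain ⟨q', hq'prime, hq'le, hq'comap⟩ := aux_going_down l.eraseLast.last.asIdeal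
      l.last.asIdeal (le_of_lt (by rwa [← PrimeSpectrum.asIdeal_lt_asIdeal] at hlt))
      q.asIdeal hcomap
    set Q' : PrimeSpectrum S := ⟨q', hq'prime⟩ with hQ'
    have hQ'lt : Q' < q := by
      rw [← PrimeSpectrum.asIdeal_lt_asIdeal]
      refine lt_of_le_of_ne hq'le (fun h => ?_)
      refine hlt.ne (PrimeSpectrum.ext ?_)
      rw [← hq'comap, show q' = q.asIdeal from h, hcomap]
    obtain ⟨l₀, hl₀len, hl₀last⟩ := ih l.eraseLast (by simp [RelSeries.eraseLast]; omega) Q'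
      (PrimeSpectrum.ext hq'comap)
    exact ⟨l₀.snoc q (hl₀last ▸ hQ'lt), by simp [hl₀len], by simp⟩

lemma aux_height_eq (q : PrimeSpectrum S) : Order.height q = Order.height (auxPi R q) := by
  refine le_antisymm (Order.height_le_height_apply_of_strictMono _ auxPi_strictMono q) ?_
  rw [Order.height_eq_iSup_last_eq]
  refine iSup₂_le fun l hl => ?_
  obtain ⟨l', hlen, hlast⟩ := aux_chain_lift l.length l rfl q hl.symm
  calc (l.length : ℕ∞) = l'.length := by rw [hlen]
  _ ≤ Order.height q := hlast ▸ Order.length_le_height_last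
end aux

/-- Let `S/R` be an integral extension of Noetherian integral domains with `R` normal
(integrally closed).  Then for every proper ideal `I` of `R`, the height of `I` in `R`
equals the height of the extension ideal `S·I` in `S`. -/
theorem statement0 {R S : Type*} [CommRing R] [CommRing S] [IsDomain R] [IsDomain S]
    [IsNoetherianRing R] [IsNoetherianRing S] [Algebra R S]
    (hinj : Function.Injective (algebraMap R S))
    [Algebra.IsIntegral R S] [IsIntegrallyClosed R]
    (I : Ideal R) (hI : I ≠ ⊤) :
    idealHeight I = idealHeight (I.map (algebraMap R S)) := by
  haveI : NoZeroSMulDivisors R S := aux_noZeroSMulDivisors_of_injective hinj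
  refine le_antisymm ?_ ?_
  · refine le_iInf₂ fun q hq => ?_
    have hle : I ≤ (auxPi R q).asIdeal := le_trans Ideal.le_comap_map (Ideal.comap_mono hq)
    have h1 : idealHeight I ≤ Order.height (auxPi R q) := by
      unfold idealHeight; exact iInf₂_le (auxPi R q) hle
    exact h1.trans (aux_height_eq q).symm.le
  · refine le_iInf₂ fun p hp => ?_
    haveI := p.isPrime
    obtain ⟨Q, hQge, hQprime, hQcomap⟩ := Ideal.exists_ideal_over_prime_of_isIntegral
      p.asIdeal (⊥ : Ideal S) (by
        intro a ha
        rw [Ideal.mem_comap, Ideal.mem_bot] at ha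
        have : a = 0 := hinj (by rwa [map_zero])
        rw [this]; exact p.asIdeal.zero_mem)
    haveI := hQprime
    set q : PrimeSpectrum S := ⟨Q, hQprime⟩
    have hmaple : I.map (algebraMap R S) ≤ q.asIdeal :=
      Ideal.map_le_iff_le_comap.mpr (hQcomap ▸ hp)
    have h1 : idealHeight (I.map (algebraMap R S)) ≤ Order.height q := by
      unfold idealHeight; exact iInf₂_le q hmaple
    refine h1.trans (le_of_eq ?_)
    calc Order.height q = Order.height (auxPi R q) := aux_height_eq q
    _ = Order.height p := by congr 1; exact PrimeSpectrum.ext hQcomap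
end

section
/- Let R be a graded algebra over a field with R₀ = K, and M a graded R-module bounded below. If (a₁,…,aₙ) is a homogeneous M-regular sequence (with each aᵢ of positive degree), then for every permutation π of {1,…,n}, the sequence (a_{π(1)},…,a_{π(n)}) is also an M-regular sequence. -/
open DirectSum Pointwise

section Aux

variable {K R M : Type*} [Field K] [CommRing R] [Algebra K R]
    [AddCommGroup M] [Module R M] [Module K M] [IsScalarTower K R M]
    (𝒜 : ℤ → Submodule K R) [GradedAlgebra 𝒜]
    (ℳ : ℤ → Submodule K M) [SetLike.GradedSMul 𝒜 ℳ] [DirectSum.Decomposition ℳ]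

lemma aux_decompose_homog_smul {r : R} {e : ℤ} (hr : r ∈ 𝒜 e) (m : M) (i : ℤ) :
    (DirectSum.decompose ℳ (r • m) i : M) = r • (DirectSum.decompose ℳ m (i - e) : M) := by
  induction m using DirectSum.Decomposition.inductionOn ℳ with
  | zero => simp
  | @homogeneous j m =>
    have hm : (m : M) ∈ ℳ j := m.2
    have hrm : r • (m : M) ∈ ℳ (e + j) := SetLike.GradedSMul.smul_mem hr hm
    by_cases h : i = e + j
    · subst h
      rw [DirectSum.decompose_of_mem_same ℳ hrm,
        show e + j - e = j by ring, DirectSum.decompose_of_mem_same ℳ hm]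
    · rw [DirectSum.decompose_of_mem_ne ℳ hrm (Ne.symm h),
        DirectSum.decompose_of_mem_ne ℳ hm (by omega), smul_zero]
  | add x y hx hy =>
    rw [smul_add, DirectSum.decompose_add, DirectSum.decompose_add]
    simp only [DirectSum.add_apply, Submodule.coe_add, hx, hy, smul_add]

/-- A submodule is homogeneous if it contains the graded components of its elements. -/
def AuxHomog (P : Submodule R M) : Prop :=
  ∀ x ∈ P, ∀ i : ℤ, (DirectSum.decompose ℳ x i : M) ∈ P

lemma auxHomog_bot : AuxHomog ℳ (⊥ : Submodule R M) := by
  intro x hx i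
  rw [Submodule.mem_bot] at hx
  subst hx; simp

lemma auxHomog_sup {P Q : Submodule R M} (hP : AuxHomog ℳ P) (hQ : AuxHomog ℳ Q) :
    AuxHomog ℳ (P ⊔ Q) := by
  intro x hx i
  obtain ⟨p, hp, q, hq, rfl⟩ := Submodule.mem_sup.mp hx
  rw [DirectSum.decompose_add]
  exact Submodule.add_mem _ (Submodule.mem_sup_left (hP p hp i))
    (Submodule.mem_sup_right (hQ q hq i))

lemma auxHomog_smul_top {r : R} {e : ℤ} (hr : r ∈ 𝒜 e) :
    AuxHomog ℳ (r • (⊤ : Submodule R M)) := by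
  intro x hx i
  rw [← SetLike.mem_coe, Submodule.coe_pointwise_smul] at hx ⊢
  obtain ⟨m, -, rfl⟩ := hx
  exact ⟨(DirectSum.decompose ℳ m (i - e) : M), trivial,
    (aux_decompose_homog_smul 𝒜 ℳ hr m i).symm⟩

lemma auxHomog_ofList_smul_top (rs : List R)
    (hrs : ∀ r ∈ rs, ∃ e : ℤ, r ∈ 𝒜 e) :
    AuxHomog ℳ (Ideal.ofList rs • (⊤ : Submodule R M)) := by
  induction rs with
  | nil =>
    rw [Ideal.ofList_nil, Submodule.bot_smul]
    exact auxHomog_bot ℳ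
  | cons r rs ih =>
    have h1 : Ideal.ofList (r :: rs) = Ideal.span {r} ⊔ Ideal.ofList rs := by
      unfold Ideal.ofList
      rw [show {x | x ∈ r :: rs} = {r} ∪ {x | x ∈ rs} by
        ext y; simp [List.mem_cons], Ideal.span_union]
    rw [h1, Submodule.sup_smul, Submodule.ideal_span_singleton_smul]
    obtain ⟨e, he⟩ := hrs r List.mem_cons_self
    exact auxHomog_sup ℳ (auxHomog_smul_top 𝒜 ℳ he)
      (ih fun s hs => hrs s (List.mem_cons_of_mem _ hs))

lemma aux_mem_of_forall_mem {b : ℤ} (hbdd : ∀ i : ℤ, i < b → ℳ i = ⊥)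
    {N : Submodule R M} (hN : AuxHomog ℳ N) {a : R} {e : ℤ} (haa : a ∈ 𝒜 e)
    (he : 0 < e) {y : M} (hy : ∀ n : ℕ, y ∈ (a ^ n • (⊤ : Submodule R M)) ⊔ N) :
    y ∈ N := by
  classical
  rw [← DirectSum.sum_support_decompose ℳ y]
  refine Submodule.sum_mem _ fun i _ => ?_
  set n : ℕ := (i + 1 - b).toNat with hn
  obtain ⟨p, hp, q, hq, hsum⟩ := Submodule.mem_sup.mp (hy n)
  have : (DirectSum.decompose ℳ y i : M)
      = (DirectSum.decompose ℳ p i : M) + (DirectSum.decompose ℳ q i : M) := by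
    rw [← hsum, DirectSum.decompose_add]; rfl
  rw [this]
  have hpow : a ^ n ∈ 𝒜 (n • e) := SetLike.pow_mem_graded n haa
  have hp0 : (DirectSum.decompose ℳ p i : M) = 0 := by
    rw [← SetLike.mem_coe, Submodule.coe_pointwise_smul] at hp
    obtain ⟨m, -, rfl⟩ := hp
    rw [aux_decompose_homog_smul 𝒜 ℳ hpow m i]
    have hlt : i - n • e < b := by
      have h1 : (i + 1 - b : ℤ) ≤ n := Int.self_le_toNat _
      have h2 : (n : ℤ) ≤ (n : ℤ) * e := le_mul_of_one_le_right (Int.natCast_nonneg n) he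
      have hns : (n : ℕ) • e = (n : ℤ) * e := nsmul_eq_mul n e
      omega
    have hzz : ∀ x ∈ ℳ (i - n • e), x = (0 : M) := by
      intro x hx
      rw [hbdd _ hlt] at hx
      simpa using hx
    rw [hzz _ (DirectSum.decompose ℳ m (i - n • e)).2, smul_zero]
  rw [hp0, zero_add]
  exact hN q hq i

lemma aux_psmul_mono {Q' : Type*} [AddCommGroup Q'] [Module R Q'] {a : R}
    {P P' : Submodule R Q'} (h : P ≤ P') : a • P ≤ a • P' := by
  intro x hx
  rw [← SetLike.mem_coe, Submodule.coe_pointwise_smul] at hx ⊢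
  obtain ⟨m, hm, rfl⟩ := hx
  exact ⟨m, h hm, rfl⟩

lemma aux_quot_torsion {b : ℤ} (hbdd : ∀ i : ℤ, i < b → ℳ i = ⊥)
    {N : Submodule R M} (hN : AuxHomog ℳ N) {a : R} {e : ℤ} (haa : a ∈ 𝒜 e)
    (he : 0 < e) (Kp : Submodule R (M ⧸ N)) (hK : Kp = a • Kp) : Kp = ⊥ := by
  have key : ∀ n : ℕ, Kp ≤ a ^ n • (⊤ : Submodule R (M ⧸ N)) := by
    intro n
    induction n with
    | zero => rw [pow_zero, one_smul]; exact le_top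
    | succ n ih =>
      calc Kp = a • Kp := hK
        _ ≤ a • (a ^ n • ⊤) := aux_psmul_mono ih
        _ = a ^ (n + 1) • ⊤ := by rw [smul_smul, ← pow_succ']
  rw [eq_bot_iff]
  intro x hx
  obtain ⟨y, rfl⟩ := Submodule.mkQ_surjective N x
  have hy : ∀ n : ℕ, y ∈ (a ^ n • (⊤ : Submodule R M)) ⊔ N := by
    intro n
    have h1 : (a ^ n • (⊤ : Submodule R (M ⧸ N)))
        = Submodule.map N.mkQ (a ^ n • (⊤ : Submodule R M)) := by
      rw [Submodule.map_pointwise_smul, Submodule.map_top, Submodule.range_mkQ]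
    have h2 := key n hx
    rw [h1] at h2
    have := Submodule.comap_map_eq N.mkQ (a ^ n • (⊤ : Submodule R M))
    have h3 : y ∈ Submodule.comap N.mkQ
        (Submodule.map N.mkQ (a ^ n • (⊤ : Submodule R M))) := h2
    rw [this, Submodule.ker_mkQ] at h3
    exact h3
  have : y ∈ N := aux_mem_of_forall_mem 𝒜 ℳ hbdd hN haa he hy
  simpa [Submodule.mem_bot, Submodule.Quotient.mk_eq_zero] using this

end Aux

/-- Let `R` be a graded algebra over a field `K` with `R₀ = K`, graded by `ℤ` with no
negative components (so effectively `ℕ`-graded), and let `M` be a graded `R`-module that is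
bounded below.  If `(a₁, …, aₙ)` is a homogeneous `M`-regular sequence (each `aᵢ` of
positive degree), then every permutation of it is again an `M`-regular sequence. -/
theorem statement2 {K R M : Type*} [Field K] [CommRing R] [Algebra K R]
    [AddCommGroup M] [Module R M] [Module K M] [IsScalarTower K R M]
    (𝒜 : ℤ → Submodule K R) [GradedAlgebra 𝒜] (h0 : 𝒜 0 = 1)
    (hneg : ∀ i : ℤ, i < 0 → 𝒜 i = ⊥)
    (ℳ : ℤ → Submodule K M) [SetLike.GradedSMul 𝒜 ℳ] [DirectSum.Decomposition ℳ]
    (hbdd : ∃ b : ℤ, ∀ i : ℤ, i < b → ℳ i = ⊥)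
    {n : ℕ} (a : Fin n → R) (d : Fin n → ℤ) (hd : ∀ i, 0 < d i)
    (ha : ∀ i, a i ∈ 𝒜 (d i))
    (hreg : RingTheory.Sequence.IsRegular M (List.ofFn a))
    (π : Equiv.Perm (Fin n)) :
    RingTheory.Sequence.IsRegular M (List.ofFn (a ∘ π)) := by
  obtain ⟨b, hb⟩ := hbdd
  have hperm : (List.ofFn a).Perm (List.ofFn (a ∘ π)) :=
    (Equiv.Perm.ofFn_comp_perm π a).symm
  have hhomog : ∀ r ∈ List.ofFn a, ∃ e : ℤ, 0 < e ∧ r ∈ 𝒜 e := by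
    intro r hr
    rw [List.mem_ofFn] at hr
    obtain ⟨i, rfl⟩ := hr
    exact ⟨d i, hd i, ha i⟩
  constructor
  · refine hreg.toIsWeaklyRegular.prototype_perm hperm ?_
    intro a₀ b₀ rs' hsub
    intro Kp hKp
    have hmem : ∀ r ∈ a₀ :: b₀ :: rs', ∃ e : ℤ, 0 < e ∧ r ∈ 𝒜 e :=
      fun r hr => hhomog r (hsub.subset hr)
    obtain ⟨e, he, hae⟩ := hmem a₀ List.mem_cons_self
    have hN : AuxHomog ℳ (Ideal.ofList rs' • (⊤ : Submodule R M)) :=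
      auxHomog_ofList_smul_top 𝒜 ℳ rs' fun r hr =>
        (hmem r (List.mem_cons_of_mem _ (List.mem_cons_of_mem _ hr))).imp
          fun e hee => hee.2
    exact aux_quot_torsion 𝒜 ℳ hb hN hae he Kp hKp
  · refine ne_of_ne_of_eq hreg.top_ne_smul (congrArg (Ideal.span · • ⊤) ?_)
    exact Set.ext fun _ => hperm.mem_iff
end

section
/- Let G be a group acting on a polynomial ring K[V] by graded K-algebra automorphisms, and let a₁, a₂ ∈ K[V]^G be homogeneous invariants of positive degree that are coprime in K[V]. Then a₁, a₂ form a regular sequence in the invariant ring K[V]^G. -/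
/-- The subalgebra of `G`-invariant elements of a `K`-algebra `P` with a `G`-action by
`K`-algebra automorphisms. -/
def invariantSubalgebra (G : Type*) [Group G] {K P : Type*} [CommSemiring K] [CommSemiring P]
    [Algebra K P] [MulSemiringAction G P] [SMulCommClass G K P] : Subalgebra K P where
  carrier := {x | ∀ σ : G, σ • x = x}
  mul_mem' := fun {x y} hx hy σ => by rw [smul_mul', hx σ, hy σ]
  add_mem' := fun {x y} hx hy σ => by rw [smul_add, hx σ, hy σ]
  one_mem' := fun σ => smul_one σ
  zero_mem' := fun σ => smul_zero σ
  algebraMap_mem' := fun c σ => by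
    rw [Algebra.algebraMap_eq_smul_one, smul_comm, smul_one]

set_option maxHeartbeats 1000000 in
set_option synthInstance.maxHeartbeats 1000000 in
/-- Let `G` act on a polynomial ring `K[V]` by graded `K`-algebra automorphisms, and let
`a₁, a₂ ∈ K[V]^G` be homogeneous invariants of positive degree which are coprime in `K[V]`.
Then `a₁, a₂` is a regular sequence in the invariant ring `K[V]^G`. -/
theorem statement9 {K G : Type*} [Field K] [Group G] {n : ℕ}
    [MulSemiringAction G (MvPolynomial (Fin n) K)]
    [SMulCommClass G K (MvPolynomial (Fin n) K)]
    (hgraded : ∀ (σ : G) (d : ℕ) (f : MvPolynomial (Fin n) K),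
      f.IsHomogeneous d → (σ • f).IsHomogeneous d)
    (a₁ a₂ : MvPolynomial (Fin n) K) (d₁ d₂ : ℕ) (hd₁ : 0 < d₁) (hd₂ : 0 < d₂)
    (hh₁ : a₁.IsHomogeneous d₁) (hh₂ : a₂.IsHomogeneous d₂)
    (hi₁ : a₁ ∈ invariantSubalgebra G (K := K)) (hi₂ : a₂ ∈ invariantSubalgebra G (K := K))
    (hcop : IsRelPrime a₁ a₂) :
    RingTheory.Sequence.IsRegular (↥(invariantSubalgebra G (K := K) (P := MvPolynomial (Fin n) K)))
      [(⟨a₁, hi₁⟩ : invariantSubalgebra G), (⟨a₂, hi₂⟩ : invariantSubalgebra G)] := by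
  set R := invariantSubalgebra G (K := K) (P := MvPolynomial (Fin n) K) with hR
  set A : R := ⟨a₁, hi₁⟩ with hA
  set B : R := ⟨a₂, hi₂⟩ with hB
  have notUnit : ∀ (a : MvPolynomial (Fin n) K) (d : ℕ), 0 < d → a.IsHomogeneous d →
      ¬ IsUnit a := by
    intro a d hd h hu
    have : IsUnit (MvPolynomial.constantCoeff a) := hu.map _
    rw [show MvPolynomial.constantCoeff a = MvPolynomial.coeff 0 a from rfl,
      h.coeff_eq_zero (by simp; omega)] at this
    exact this.ne_zero rfl
  have ha₁ : a₁ ≠ 0 := by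
    rintro rfl
    exact notUnit a₂ d₂ hd₂ hh₂ (hcop (dvd_zero a₂) dvd_rfl)
  have cc₁ : MvPolynomial.constantCoeff a₁ = 0 := hh₁.coeff_eq_zero (by simp; omega)
  have cc₂ : MvPolynomial.constantCoeff a₂ = 0 := hh₂.coeff_eq_zero (by simp; omega)
  rw [RingTheory.Sequence.isRegular_iff]
  constructor
  · -- weakly regular
    constructor
    intro i hi
    match i, hi with
    | 0, _ =>
      rw [List.take_zero, Ideal.ofList_nil, Submodule.bot_smul,
        isSMulRegular_quotient_iff_mem_of_smul_mem]
      intro x hx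
      rw [Submodule.mem_bot] at hx ⊢
      have : a₁ * (x : MvPolynomial (Fin n) K) = 0 := congrArg Subtype.val hx
      rcases mul_eq_zero.mp this with h | h
      · exact absurd h ha₁
      · exact Subtype.ext h
    | 1, _ =>
      have hspan : Ideal.ofList (List.take 1 [A, B]) • (⊤ : Submodule R R)
          = Ideal.span {A} := by
        rw [show List.take 1 [A, B] = [A] from rfl, Ideal.ofList_singleton,
          smul_eq_mul, Ideal.mul_top]
      rw [List.getElem_cons_succ, List.getElem_cons_zero, hspan,
        isSMulRegular_quotient_iff_mem_of_smul_mem]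
      intro x hx
      rw [Ideal.mem_span_singleton] at hx ⊢
      obtain ⟨c, hc⟩ := hx
      rw [smul_eq_mul] at hc
      have hP : a₂ * (x : MvPolynomial (Fin n) K) = a₁ * (c : MvPolynomial (Fin n) K) := by
        simpa using congrArg Subtype.val hc
      have hdvd : a₁ ∣ (x : MvPolynomial (Fin n) K) := by
        refine hcop.dvd_of_dvd_mul_right ⟨(c : MvPolynomial (Fin n) K), ?_⟩
        rw [mul_comm (x : MvPolynomial (Fin n) K) a₂, hP]
      obtain ⟨q, hq⟩ := hdvd
      have hqinv : q ∈ R := by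
        intro σ
        have h1 : σ • ((x : MvPolynomial (Fin n) K)) = x := x.2 σ
        rw [hq, smul_mul', hi₁ σ] at h1
        exact mul_left_cancel₀ ha₁ h1
      exact ⟨⟨q, hqinv⟩, Subtype.ext hq⟩
  · -- R/(a₁,a₂) ≠ 0
    intro htop
    have h1 : (1 : R) ∈ Ideal.ofList [A, B] • (⊤ : Submodule R R) := by
      rw [← htop]; trivial
    rw [smul_eq_mul, Ideal.mul_top] at h1
    have hset : Ideal.ofList [A, B] = Ideal.span {A, B} := by
      unfold Ideal.ofList
      congr 1
      ext x; simp
    rw [hset, Ideal.mem_span_pair] at h1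
    obtain ⟨u, v, huv⟩ := h1
    have := congrArg (MvPolynomial.constantCoeff ∘ (Subtype.val : R → MvPolynomial (Fin n) K))
      huv
    simp only [Function.comp_apply] at this
    rw [show ((u * A + v * B : R) : MvPolynomial (Fin n) K)
        = (u : MvPolynomial (Fin n) K) * a₁ + (v : MvPolynomial (Fin n) K) * a₂ from rfl,
      map_add, map_mul, map_mul, cc₁, cc₂] at this
    simp at this
end

section
/- Frobenius invariants isomorphism: Let G act linearly on P = K[X₁,…,Xₙ,Y₁,…,Y_m] over a field K of characteristic p > 0, where the action on the X-variables is the p-th Frobenius twist of some linear G-action, i.e. there is a second polynomial ring Q = K[Z₁,…,Zₙ,Y₁,…,Y_m] with G-action satisfying σ·Zⱼ = Σᵢ a_{ij,σ}^p Zᵢ whenever σ·Xⱼ = Σᵢ a_{ij,σ} Xᵢ (and the same action on the Y's). Then the K-algebra homomorphism φ : Q → P defined by Zᵢ ↦ Xᵢ^p, Yᵢ ↦ Yᵢ restricts to an isomorphism of invariant rings Q^G ≅ P^G ∩ K[X₁^p,…,Xₙ^p,Y₁,…,Y_m]. -/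
open MvPolynomial

/-- The `K`-algebra map `φ : Q → P` between copies of `K[Z₁,…,Zₙ,Y₁,…,Y_m]` and
`K[X₁,…,Xₙ,Y₁,…,Y_m]`, sending `Zᵢ ↦ Xᵢ^p` and `Yᵢ ↦ Yᵢ`. -/
noncomputable def frobeniusSubst (K : Type*) [CommSemiring K] (p n m : ℕ) :
    MvPolynomial (Fin n ⊕ Fin m) K →ₐ[K] MvPolynomial (Fin n ⊕ Fin m) K :=
  MvPolynomial.aeval fun s => match s with
    | Sum.inl i => (X (Sum.inl i) : MvPolynomial (Fin n ⊕ Fin m) K) ^ p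
    | Sum.inr i => X (Sum.inr i)

section Aux

variable {K : Type*} [CommSemiring K] {p n m : ℕ}

/-- Exponents used by `frobeniusSubst`. -/
def frobExp (p n m : ℕ) : Fin n ⊕ Fin m → ℕ := Sum.elim (fun _ => p) (fun _ => 1)

lemma frobExp_pos (hp : 0 < p) (s : Fin n ⊕ Fin m) : 0 < frobExp p n m s := by
  cases s with
  | inl i => exact hp
  | inr i => exact Nat.one_pos

lemma frobeniusSubst_eq (K : Type*) [CommSemiring K] (p n m : ℕ) :
    frobeniusSubst K p n m =
      aeval (fun s => (X s : MvPolynomial (Fin n ⊕ Fin m) K) ^ frobExp p n m s) := by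
  unfold frobeniusSubst
  congr 1
  funext s
  cases s with
  | inl i => rfl
  | inr i => exact (pow_one _).symm

/-- The map on exponent vectors induced by `frobeniusSubst`. -/
noncomputable def frobExpMap (p n m : ℕ) (u : (Fin n ⊕ Fin m) →₀ ℕ) : (Fin n ⊕ Fin m) →₀ ℕ :=
  Finsupp.equivFunOnFinite.symm fun s => frobExp p n m s * u s

lemma frobExpMap_apply (u : (Fin n ⊕ Fin m) →₀ ℕ) (s : Fin n ⊕ Fin m) :
    frobExpMap p n m u s = frobExp p n m s * u s := rfl

lemma frobExpMap_injective (hp : 0 < p) :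
    Function.Injective (frobExpMap p n m) := by
  intro u v h
  ext s
  have h2 : frobExp p n m s * u s = frobExp p n m s * v s := by
    rw [← frobExpMap_apply, ← frobExpMap_apply, h]
  exact Nat.eq_of_mul_eq_mul_left (frobExp_pos hp s) h2

lemma frobeniusSubst_monomial (u : (Fin n ⊕ Fin m) →₀ ℕ) (r : K) :
    frobeniusSubst K p n m (monomial u r) = monomial (frobExpMap p n m u) r := by
  rw [frobeniusSubst_eq, aeval_monomial, monomial_eq]
  have h1 : (u.prod fun s k => ((X s : MvPolynomial (Fin n ⊕ Fin m) K) ^ frobExp p n m s) ^ k)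
      = ∏ s : Fin n ⊕ Fin m, (X s : MvPolynomial (Fin n ⊕ Fin m) K) ^ (frobExp p n m s * u s) := by
    rw [Finsupp.prod_fintype]
    · exact Finset.prod_congr rfl fun s _ => by rw [← pow_mul]
    · intro s; exact pow_zero _
  have h2 : ((frobExpMap p n m u).prod fun s k => (X s : MvPolynomial (Fin n ⊕ Fin m) K) ^ k)
      = ∏ s : Fin n ⊕ Fin m, (X s : MvPolynomial (Fin n ⊕ Fin m) K) ^ (frobExp p n m s * u s) := by
    rw [Finsupp.prod_fintype]
    · exact Finset.prod_congr rfl fun s _ => by rw [frobExpMap_apply]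
    · intro s; exact pow_zero _
  rw [h1, h2, algebraMap_eq]

lemma coeff_frobeniusSubst (hp : 0 < p) (f : MvPolynomial (Fin n ⊕ Fin m) K)
    (d : (Fin n ⊕ Fin m) →₀ ℕ) :
    coeff (frobExpMap p n m d) (frobeniusSubst K p n m f) = coeff d f := by
  induction f using MvPolynomial.induction_on' with
  | monomial u r =>
    rw [frobeniusSubst_monomial, coeff_monomial, coeff_monomial]
    by_cases h : u = d
    · simp [h]
    · rw [if_neg (fun hc => h (frobExpMap_injective hp hc)), if_neg h]
  | add f g hf hg => rw [map_add, coeff_add, coeff_add, hf, hg]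

lemma frobeniusSubst_injective (hp : 0 < p) :
    Function.Injective (frobeniusSubst K p n m) := by
  intro f g h
  ext d
  rw [← coeff_frobeniusSubst hp f d, ← coeff_frobeniusSubst hp g d, h]

end Aux

/-- Frobenius invariants isomorphism.  Let `G` act linearly on
`P = K[X₁,…,Xₙ,Y₁,…,Y_m]` (char `K = p > 0`) and on `Q = K[Z₁,…,Zₙ,Y₁,…,Y_m]` by the
`p`-th Frobenius twist of the action on the `X`-variables (same action on the `Y`'s).
Then `φ : Q → P`, `Zᵢ ↦ Xᵢ^p`, `Yᵢ ↦ Yᵢ` is injective and maps the invariant ring `Q^G`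
onto `P^G ∩ K[X₁^p,…,Xₙ^p,Y₁,…,Y_m]` (the latter being `P^G ∩ range φ`). -/
theorem statement18 {K G : Type*} [Field K] [Group G] (p : ℕ) [Fact p.Prime] [CharP K p]
    {n m : ℕ}
    (ρP ρQ : G →* (MvPolynomial (Fin n ⊕ Fin m) K ≃ₐ[K] MvPolynomial (Fin n ⊕ Fin m) K))
    (a : G → Matrix (Fin n) (Fin n) K) (b : G → Matrix (Fin m) (Fin m) K)
    (hP1 : ∀ (σ : G) (j : Fin n),
      ρP σ (X (Sum.inl j)) = ∑ i : Fin n, C (a σ i j) * X (Sum.inl i))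
    (hP2 : ∀ (σ : G) (j : Fin m),
      ρP σ (X (Sum.inr j)) = ∑ i : Fin m, C (b σ i j) * X (Sum.inr i))
    (hQ1 : ∀ (σ : G) (j : Fin n),
      ρQ σ (X (Sum.inl j)) = ∑ i : Fin n, C (a σ i j ^ p) * X (Sum.inl i))
    (hQ2 : ∀ (σ : G) (j : Fin m),
      ρQ σ (X (Sum.inr j)) = ∑ i : Fin m, C (b σ i j) * X (Sum.inr i)) :
    Function.Injective (frobeniusSubst K p n m) ∧
      (frobeniusSubst K p n m) '' {q | ∀ σ : G, ρQ σ q = q} =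
        {f | ∀ σ : G, ρP σ f = f} ∩ Set.range (frobeniusSubst K p n m) := by
  have hp : 0 < p := (Fact.out : p.Prime).pos
  have hinj : Function.Injective (frobeniusSubst K p n m) := frobeniusSubst_injective hp
  set φ := frobeniusSubst K p n m with hφ
  have hX1 : ∀ j : Fin n, φ (X (Sum.inl j)) = X (Sum.inl j) ^ p := by
    intro j; simp [hφ, frobeniusSubst]
  have hX2 : ∀ j : Fin m, φ (X (Sum.inr j)) = X (Sum.inr j) := by
    intro j; simp [hφ, frobeniusSubst]
  -- equivariance
  have comm : ∀ σ : G, (ρP σ).toAlgHom.comp φ = φ.comp (ρQ σ).toAlgHom := by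
    intro σ
    apply MvPolynomial.algHom_ext
    intro s
    cases s with
    | inl j =>
      simp only [AlgHom.comp_apply, AlgEquiv.toAlgHom_eq_coe, AlgHom.coe_coe, AlgEquiv.coe_toAlgHom]
      rw [hX1, map_pow, hP1, hQ1, sum_pow_char, map_sum]
      refine Finset.sum_congr rfl fun i _ => ?_
      rw [mul_pow, ← C_pow, map_mul, algHom_C, hX1, algebraMap_eq]
    | inr j =>
      simp only [AlgHom.comp_apply, AlgEquiv.toAlgHom_eq_coe, AlgHom.coe_coe, AlgEquiv.coe_toAlgHom]
      rw [hX2, hP2, hQ2, map_sum]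
      refine Finset.sum_congr rfl fun i _ => ?_
      rw [map_mul, algHom_C, hX2, algebraMap_eq]
  have comm' : ∀ (σ : G) (q : MvPolynomial (Fin n ⊕ Fin m) K),
      ρP σ (φ q) = φ (ρQ σ q) := fun σ q => AlgHom.congr_fun (comm σ) q
  refine ⟨hinj, ?_⟩
  ext f
  constructor
  · rintro ⟨q, hq, rfl⟩
    exact ⟨fun σ => by rw [comm', hq σ], ⟨q, rfl⟩⟩
  · rintro ⟨hf, q, rfl⟩
    refine ⟨q, fun σ => hinj ?_, rfl⟩
    rw [← comm', hf σ]
end
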